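/- For n ≥ 4, let τ send ((r,s),(p,q),(a,b)) to (ra + sã, pb + qb̃), where r² + s² = 1 and p² + q² = 1. Then: (i) if (a,b) ∈ W_{2^{n−1}−1,2} then (ra + sã, pb + qb̃) ∈ W_{2^{n−1}−1,2}; (ii) if (a,b) ∈ X_n then (ra + sã, pb + qb̃) ∈ X_n, i.e. ‖ra + sã‖ = ‖pb + qb̃‖ = 1 and (ra + sã)(pb + qb̃) = 0; (iii) τ defines a free action of the torus T = S¹ × S¹ on W_{2^{n−1}−1,2} and on X_n. -/

import Mathlib

noncomputable section

/-- The Cayley–Dickson algebra `A n` of dimension `2^n` over `ℝ`: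
`A 0 = ℝ` and `A (n+1) = A n × A n`. -/
def CD : ℕ → Type
  | 0 => ℝ
  | n + 1 => CD n × CD n

namespace CD

instance instAddCommGroup : (n : ℕ) → AddCommGroup (CD n)
  | 0 => inferInstanceAs (AddCommGroup ℝ)
  | n + 1 =>
    letI := instAddCommGroup n
    inferInstanceAs (AddCommGroup (CD n × CD n))

instance instModule : (n : ℕ) → Module ℝ (CD n)
  | 0 => inferInstanceAs (Module ℝ ℝ)
  | n + 1 =>
    letI := instAddCommGroup n
    letI := instModule n
    inferInstanceAs (Module ℝ (CD n × CD n))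

/-- Conjugation: `x̄ = x` on `ℝ` and `(x₁,x₂)‾ = (x̄₁, -x₂)`. -/
protected def conj : {n : ℕ} → CD n → CD n
  | 0, x => x
  | _ + 1, x => (CD.conj x.1, -x.2)

/-- Cayley–Dickson multiplication: `(a,b)(x,y) = (ax - ȳb, ya + bx̄)`. -/
protected def mul : {n : ℕ} → CD n → CD n → CD n
  | 0, x, y => (show ℝ from x) * (show ℝ from y)
  | _ + 1, x, y =>
    (CD.mul x.1 y.1 - CD.mul (CD.conj y.2) x.2,
     CD.mul y.2 x.1 + CD.mul x.2 (CD.conj y.1))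

instance instMul (n : ℕ) : Mul (CD n) := ⟨CD.mul⟩

/-- The multiplicative unit `e₀` of `A n`. -/
def e0 : (n : ℕ) → CD n
  | 0 => (1 : ℝ)
  | n + 1 => (e0 n, 0)

/-- The element `ẽ₀ = (0, e₀)` of `A n` (junk value `0` for `n = 0`). -/
def te0 : (n : ℕ) → CD n
  | 0 => 0
  | n + 1 => (0, e0 n)

/-- The "complexification" `α̃ = (-b, a)` of `α = (a,b)` (junk value `0` for `n = 0`);
note `α̃ = α·ẽ₀`. -/
def tilde : {n : ℕ} → CD n → CD n
  | 0, _ => 0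
  | _ + 1, x => (-x.2, x.1)

/-- The standard inner product on `A n ≅ ℝ^{2^n}`. -/
protected def inner : {n : ℕ} → CD n → CD n → ℝ
  | 0, x, y => (show ℝ from x) * (show ℝ from y)
  | _ + 1, x, y => CD.inner x.1 y.1 + CD.inner x.2 y.2

/-- The euclidean norm on `A n`. -/
protected def norm {n : ℕ} (x : CD n) : ℝ := Real.sqrt (CD.inner x x)

/-- `x` is pure if its trace `t(x) = x + x̄` vanishes. -/
def IsPure {n : ℕ} (x : CD n) : Prop := x + CD.conj x = 0

/-- `x = (a,b)` is doubly pure if both `a` and `b` are pure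
(equivalently, both `x` and `x̃` are pure). -/
def IsDoublyPure : {n : ℕ} → CD n → Prop
  | 0, x => x = 0
  | _ + 1, x => IsPure x.1 ∧ IsPure x.2

/-- The associator `(x,y,z) = (xy)z - x(yz)`. -/
def assoc {n : ℕ} (x y z : CD n) : CD n := (x * y) * z - x * (y * z)

/-- The subspace `ℍ_a`: the real span of `{e₀, ã, a, ẽ₀}`. -/
def Ha {n : ℕ} (a : CD n) : Submodule ℝ (CD n) :=
  Submodule.span ℝ {e0 n, tilde a, a, te0 n}

/-- The orthogonal complement `ℍ_a^⊥` of `ℍ_a` in `A n`. -/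
def HaPerp {n : ℕ} (a : CD n) : Set (CD n) :=
  {x | ∀ y ∈ Ha a, CD.inner x y = 0}

/-- The element `ε = (ẽ₀, 0)` of `A (n+1)`. -/
def eps (n : ℕ) : CD (n + 1) := (te0 n, 0)

/-- `α̂ = (b,a)` for `α = (a,b) ∈ A (n+1)`. -/
def hat {n : ℕ} (x : CD (n + 1)) : CD (n + 1) := (x.2, x.1)

/-- The element `(a, b)` of `A (n+1) = A n × A n`. -/
def pair {n : ℕ} (a b : CD n) : CD (n + 1) := (a, b)

end CD

namespace CD

-- ### basic component lemmas
lemma fst_add {n : ℕ} (x y : CD (n+1)) : (x + y).1 = x.1 + y.1 := rfl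
lemma snd_add {n : ℕ} (x y : CD (n+1)) : (x + y).2 = x.2 + y.2 := rfl
lemma fst_smul {n : ℕ} (r : ℝ) (x : CD (n+1)) : (r • x).1 = r • x.1 := rfl
lemma snd_smul {n : ℕ} (r : ℝ) (x : CD (n+1)) : (r • x).2 = r • x.2 := rfl
lemma fst_neg {n : ℕ} (x : CD (n+1)) : (-x).1 = -x.1 := rfl
lemma snd_neg {n : ℕ} (x : CD (n+1)) : (-x).2 = -x.2 := rfl
lemma fst_zero {n : ℕ} : (0 : CD (n+1)).1 = 0 := rfl
lemma snd_zero {n : ℕ} : (0 : CD (n+1)).2 = 0 := rfl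
lemma pair_ext {n : ℕ} (x y : CD (n+1)) (h1 : x.1 = y.1) (h2 : x.2 = y.2) : x = y := by
  exact Prod.ext h1 h2
lemma pair_eta {n : ℕ} (x : CD (n+1)) : ((x.1, x.2) : CD (n+1)) = x := rfl

lemma mul_def {n : ℕ} (x y : CD (n+1)) :
    x * y = (x.1 * y.1 - CD.conj y.2 * x.2, y.2 * x.1 + x.2 * CD.conj y.1) := rfl
lemma mul_def0 (x y : CD 0) : x * y = (show ℝ from x) * (show ℝ from y) := rfl
lemma conj_def {n : ℕ} (x : CD (n+1)) : CD.conj x = (CD.conj x.1, -x.2) := rfl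
lemma conj_def0 (x : CD 0) : CD.conj x = x := rfl
lemma inner_def {n : ℕ} (x y : CD (n+1)) :
    CD.inner x y = CD.inner x.1 y.1 + CD.inner x.2 y.2 := rfl
lemma inner_def0 (x y : CD 0) : CD.inner x y = (show ℝ from x) * (show ℝ from y) := rfl
lemma tilde_def {n : ℕ} (x : CD (n+1)) : tilde x = (-x.2, x.1) := rfl
lemma smul_def0 (r : ℝ) (x : CD 0) : r • x = r * (show ℝ from x) := rfl

-- ### inner product linearity
lemma inner_comm : ∀ {n : ℕ} (x y : CD n), CD.inner x y = CD.inner y x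
  | 0, x, y => mul_comm (show ℝ from x) (show ℝ from y)
  | n + 1, x, y => by
    rw [inner_def, inner_def, inner_comm x.1, inner_comm x.2]

lemma inner_add_right : ∀ {n : ℕ} (x y z : CD n),
    CD.inner x (y + z) = CD.inner x y + CD.inner x z
  | 0, x, y, z => mul_add (show ℝ from x) (show ℝ from y) (show ℝ from z)
  | n + 1, x, y, z => by
    rw [inner_def, inner_def, inner_def, fst_add, snd_add,
      inner_add_right x.1, inner_add_right x.2]; ring

lemma inner_smul_right : ∀ {n : ℕ} (r : ℝ) (x y : CD n),
    CD.inner x (r • y) = r * CD.inner x y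
  | 0, r, x, y => by erw [smul_def0, inner_def0, inner_def0]; ring
  | n + 1, r, x, y => by
    rw [inner_def, inner_def, fst_smul, snd_smul,
      inner_smul_right r x.1, inner_smul_right r x.2]; ring

lemma inner_zero_right : ∀ {n : ℕ} (x : CD n), CD.inner x 0 = 0
  | 0, x => mul_zero (show ℝ from x)
  | n + 1, x => by
    rw [inner_def, fst_zero, snd_zero, inner_zero_right x.1, inner_zero_right x.2]; ring

lemma inner_neg_right {n : ℕ} (x y : CD n) : CD.inner x (-y) = -CD.inner x y := by
  have : (-y : CD n) = (-1 : ℝ) • y := by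
    rw [neg_smul, one_smul]
  rw [this, inner_smul_right]; ring

lemma inner_add_left {n : ℕ} (x y z : CD n) :
    CD.inner (x + y) z = CD.inner x z + CD.inner y z := by
  rw [inner_comm, inner_add_right, inner_comm z x, inner_comm z y]

lemma inner_smul_left {n : ℕ} (r : ℝ) (x y : CD n) :
    CD.inner (r • x) y = r * CD.inner x y := by
  rw [inner_comm, inner_smul_right, inner_comm]

lemma inner_neg_left {n : ℕ} (x y : CD n) : CD.inner (-x) y = -CD.inner x y := by
  rw [inner_comm, inner_neg_right, inner_comm]

lemma inner_zero_left {n : ℕ} (x : CD n) : CD.inner 0 x = 0 := by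
  rw [inner_comm, inner_zero_right]

lemma inner_combo {n : ℕ} (r s p q : ℝ) (x y u v : CD n) :
    CD.inner (r • x + s • y) (p • u + q • v) =
      r * p * CD.inner x u + r * q * CD.inner x v +
        s * p * CD.inner y u + s * q * CD.inner y v := by
  simp only [inner_add_left, inner_add_right, inner_smul_left, inner_smul_right]; ring


-- ### conjugation
lemma conj_conj : ∀ {n : ℕ} (x : CD n), CD.conj (CD.conj x) = x
  | 0, x => rfl
  | n + 1, x => by
    rw [conj_def, conj_def]
    exact pair_ext _ _ (conj_conj x.1) (neg_neg x.2)

lemma conj_add : ∀ {n : ℕ} (x y : CD n), CD.conj (x + y) = CD.conj x + CD.conj y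
  | 0, x, y => rfl
  | n + 1, x, y => by
    rw [conj_def, conj_def, conj_def]
    refine pair_ext _ _ ?_ ?_
    · erw [fst_add, fst_add, conj_add x.1]
    · erw [snd_add, snd_add]; exact neg_add x.2 y.2

lemma conj_smul : ∀ {n : ℕ} (r : ℝ) (x : CD n), CD.conj (r • x) = r • CD.conj x
  | 0, r, x => rfl
  | n + 1, r, x => by
    rw [conj_def, conj_def]
    refine pair_ext _ _ ?_ ?_
    · erw [fst_smul, fst_smul, conj_smul r x.1]
    · erw [snd_smul, snd_smul]; exact (smul_neg r x.2).symm

lemma conj_neg {n : ℕ} (x : CD n) : CD.conj (-x) = -CD.conj x := by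
  have h : (-x : CD n) = (-1 : ℝ) • x := by rw [neg_smul, one_smul]
  rw [h, conj_smul, neg_smul, one_smul]

lemma conj_zero {n : ℕ} : CD.conj (0 : CD n) = 0 := by
  have := conj_smul (n := n) 0 0
  rwa [zero_smul, zero_smul] at this

lemma conj_e0 : ∀ {n : ℕ}, CD.conj (e0 n) = e0 n
  | 0 => rfl
  | n + 1 => by
    erw [show e0 (n+1) = ((e0 n, 0) : CD (n+1)) from rfl, conj_def]
    exact pair_ext _ _ conj_e0 neg_zero

lemma inner_conj : ∀ {n : ℕ} (x y : CD n), CD.inner (CD.conj x) (CD.conj y) = CD.inner x y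
  | 0, x, y => rfl
  | n + 1, x, y => by
    erw [conj_def, conj_def, inner_def, inner_def]
    show CD.inner (CD.conj x.1) (CD.conj y.1) + CD.inner (-x.2) (-y.2) = _
    rw [inner_conj x.1, inner_neg_left, inner_neg_right, neg_neg]

-- ### multiplication: bilinearity
lemma fst_mul {n : ℕ} (x y : CD (n+1)) : (x * y).1 = x.1 * y.1 - CD.conj y.2 * x.2 := rfl
lemma snd_mul {n : ℕ} (x y : CD (n+1)) : (x * y).2 = y.2 * x.1 + x.2 * CD.conj y.1 := rfl

lemma mul_zero' : ∀ {n : ℕ} (x : CD n), x * 0 = 0 ∧ (0 : CD n) * x = 0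
  | 0, x => ⟨mul_zero (show ℝ from x), zero_mul (show ℝ from x)⟩
  | n + 1, x => by
    constructor
    · rw [mul_def]
      refine pair_ext _ _ ?_ ?_
      · show x.1 * 0 - CD.conj 0 * x.2 = 0
        rw [conj_zero, (mul_zero' x.1).1, (mul_zero' x.2).2, sub_zero]
      · show (0 : CD n) * x.1 + x.2 * CD.conj 0 = 0
        rw [conj_zero, (mul_zero' x.1).2, (mul_zero' x.2).1, add_zero]
    · rw [mul_def]
      refine pair_ext _ _ ?_ ?_
      · show (0 : CD (n+1)).1 * x.1 - CD.conj x.2 * (0 : CD (n+1)).2 = 0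
        rw [fst_zero, snd_zero, (mul_zero' x.1).2, (mul_zero' (CD.conj x.2)).1, sub_zero]
      · show x.2 * (0 : CD (n+1)).1 + (0 : CD (n+1)).2 * CD.conj x.1 = 0
        rw [fst_zero, snd_zero, (mul_zero' x.2).1, (mul_zero' (CD.conj x.1)).2, add_zero]

lemma mul_add' : ∀ {n : ℕ} (x y z : CD n),
    (x * (y + z) = x * y + x * z) ∧ ((y + z) * x = y * x + z * x)
  | 0, x, y, z => ⟨mul_add (show ℝ from x) y z, add_mul (show ℝ from y) z x⟩
  | n + 1, x, y, z => by
    constructor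
    · rw [mul_def, mul_def, mul_def]
      refine pair_ext _ _ ?_ ?_
      · show x.1 * (y + z).1 - CD.conj (y + z).2 * x.2 = (x.1 * y.1 - CD.conj y.2 * x.2) + (x.1 * z.1 - CD.conj z.2 * x.2)
        erw [fst_add, snd_add, conj_add, (mul_add' x.1 y.1 z.1).1,
          (mul_add' x.2 (CD.conj y.2) (CD.conj z.2)).2]
        abel
      · show (y + z).2 * x.1 + x.2 * CD.conj (y + z).1 = (y.2 * x.1 + x.2 * CD.conj y.1) + (z.2 * x.1 + x.2 * CD.conj z.1)
        erw [fst_add, snd_add, conj_add, (mul_add' x.1 y.2 z.2).2,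
          (mul_add' x.2 (CD.conj y.1) (CD.conj z.1)).1]
        abel
    · rw [mul_def, mul_def, mul_def]
      refine pair_ext _ _ ?_ ?_
      · show (y + z).1 * x.1 - CD.conj x.2 * (y + z).2 = (y.1 * x.1 - CD.conj x.2 * y.2) + (z.1 * x.1 - CD.conj x.2 * z.2)
        erw [fst_add, snd_add, (mul_add' x.1 y.1 z.1).2,
          (mul_add' (CD.conj x.2) y.2 z.2).1]
        abel
      · show x.2 * (y + z).1 + (y + z).2 * CD.conj x.1 = (x.2 * y.1 + y.2 * CD.conj x.1) + (x.2 * z.1 + z.2 * CD.conj x.1)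
        erw [fst_add, snd_add, (mul_add' x.2 y.1 z.1).1,
          (mul_add' (CD.conj x.1) y.2 z.2).2]
        abel

lemma mul_smul' : ∀ {n : ℕ} (r : ℝ) (x y : CD n),
    (x * (r • y) = r • (x * y)) ∧ ((r • y) * x = r • (y * x))
  | 0, r, x, y => by
    constructor
    · show (show ℝ from x) * (r • (show ℝ from y)) = r • ((show ℝ from x) * (show ℝ from y))
      rw [smul_eq_mul, smul_eq_mul]; ring
    · show (r • (show ℝ from y)) * (show ℝ from x) = r • ((show ℝ from y) * (show ℝ from x))
      rw [smul_eq_mul, smul_eq_mul]; ring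
  | n + 1, r, x, y => by
    constructor
    · rw [mul_def, mul_def]
      refine pair_ext _ _ ?_ ?_
      · show x.1 * (r • y).1 - CD.conj (r • y).2 * x.2 = (r • (x * y)).1
        rw [fst_smul, snd_smul, fst_smul, conj_smul, (mul_smul' r x.1 y.1).1,
          (mul_smul' r x.2 (CD.conj y.2)).2, fst_mul, smul_sub]
      · show (r • y).2 * x.1 + x.2 * CD.conj (r • y).1 = (r • (x * y)).2
        rw [fst_smul, snd_smul, snd_smul, conj_smul, (mul_smul' r x.1 y.2).2,
          (mul_smul' r x.2 (CD.conj y.1)).1, snd_mul, smul_add]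
    · rw [mul_def, mul_def]
      refine pair_ext _ _ ?_ ?_
      · show (r • y).1 * x.1 - CD.conj x.2 * (r • y).2 = (r • (y * x)).1
        rw [fst_smul, snd_smul, fst_smul, (mul_smul' r x.1 y.1).2,
          (mul_smul' r (CD.conj x.2) y.2).1, fst_mul, smul_sub]
      · show x.2 * (r • y).1 + (r • y).2 * CD.conj x.1 = (r • (y * x)).2
        rw [fst_smul, snd_smul, snd_smul, (mul_smul' r x.2 y.1).1,
          (mul_smul' r (CD.conj x.1) y.2).2, snd_mul, smul_add]

lemma mul_neg' {n : ℕ} (x y : CD n) : x * (-y) = -(x * y) := by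
  have h : (-y : CD n) = (-1 : ℝ) • y := by rw [neg_smul, one_smul]
  rw [h, (mul_smul' (-1) x y).1, neg_smul, one_smul]

lemma neg_mul' {n : ℕ} (x y : CD n) : (-y) * x = -(y * x) := by
  have h : (-y : CD n) = (-1 : ℝ) • y := by rw [neg_smul, one_smul]
  rw [h, (mul_smul' (-1) x y).2, neg_smul, one_smul]


-- ### unit
lemma e0_succ (n : ℕ) : e0 (n+1) = ((e0 n, 0) : CD (n+1)) := rfl
lemma te0_succ (n : ℕ) : te0 (n+1) = ((0, e0 n) : CD (n+1)) := rfl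

lemma mul_e0 : ∀ {n : ℕ} (x : CD n), x * e0 n = x ∧ e0 n * x = x
  | 0, x => ⟨mul_one (show ℝ from x), one_mul (show ℝ from x)⟩
  | n + 1, x => by
    constructor
    · refine pair_ext _ _ ?_ ?_
      · rw [fst_mul, e0_succ]
        show x.1 * e0 n - CD.conj 0 * x.2 = x.1
        rw [conj_zero, (mul_e0 x.1).1, (mul_zero' x.2).2, sub_zero]
      · rw [snd_mul, e0_succ]
        show (0 : CD n) * x.1 + x.2 * CD.conj (e0 n) = x.2
        rw [conj_e0, (mul_zero' x.1).2, (mul_e0 x.2).1, zero_add]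
    · refine pair_ext _ _ ?_ ?_
      · rw [fst_mul, e0_succ]
        show e0 n * x.1 - CD.conj x.2 * 0 = x.1
        rw [(mul_e0 x.1).2, (mul_zero' (CD.conj x.2)).1, sub_zero]
      · rw [snd_mul, e0_succ]
        show x.2 * e0 n + (0 : CD n) * CD.conj x.1 = x.2
        rw [(mul_e0 x.2).1, (mul_zero' (CD.conj x.1)).2, add_zero]

lemma smul_e0_succ (n : ℕ) (r : ℝ) : r • e0 (n+1) = ((r • e0 n, 0) : CD (n+1)) := by
  rw [e0_succ]
  exact pair_ext _ _ rfl (smul_zero r)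

-- ### conj is an antihomomorphism
lemma fst_conj {n : ℕ} (x : CD (n+1)) : (CD.conj x).1 = CD.conj x.1 := rfl
lemma snd_conj {n : ℕ} (x : CD (n+1)) : (CD.conj x).2 = -x.2 := rfl

lemma conj_mul' : ∀ {n : ℕ} (x y : CD n), CD.conj (x * y) = CD.conj y * CD.conj x
  | 0, x, y => mul_comm (show ℝ from x) (show ℝ from y)
  | n + 1, x, y => by
    refine pair_ext _ _ ?_ ?_
    · rw [fst_conj, fst_mul, fst_mul, fst_conj, fst_conj, snd_conj, snd_conj]
      rw [sub_eq_add_neg, conj_add, conj_neg, conj_mul' x.1 y.1,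
        conj_mul' (CD.conj y.2) x.2, conj_conj, conj_neg, neg_mul', mul_neg', neg_neg,
        ← sub_eq_add_neg]
    · rw [snd_conj, snd_mul, snd_mul, fst_conj, fst_conj, snd_conj, snd_conj, conj_conj,
        neg_mul', neg_mul', neg_add]
      abel

-- ### x * conj x = ⟨x,x⟩ e0
lemma mul_conj_self : ∀ {n : ℕ} (x : CD n),
    x * CD.conj x = (CD.inner x x) • e0 n ∧ CD.conj x * x = (CD.inner x x) • e0 n
  | 0, x => by
    constructor
    · show (show ℝ from x) * (show ℝ from x) = (CD.inner x x) • (show ℝ from e0 0)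
      show (show ℝ from x) * (show ℝ from x) = (CD.inner x x) * 1
      rw [inner_def0, mul_one]
    · show (show ℝ from x) * (show ℝ from x) = (CD.inner x x) • (show ℝ from e0 0)
      show (show ℝ from x) * (show ℝ from x) = (CD.inner x x) * 1
      rw [inner_def0, mul_one]
  | n + 1, x => by
    constructor
    · rw [smul_e0_succ]
      refine pair_ext _ _ ?_ ?_
      · rw [fst_mul, fst_conj, snd_conj]
        rw [conj_neg, neg_mul', (mul_conj_self x.1).1, (mul_conj_self x.2).2, sub_neg_eq_add,
          inner_def, ← add_smul]
      · rw [snd_mul, fst_conj, snd_conj, conj_conj, neg_mul', neg_add_cancel]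
    · rw [smul_e0_succ]
      refine pair_ext _ _ ?_ ?_
      · rw [fst_mul, fst_conj, snd_conj]
        rw [mul_neg', (mul_conj_self x.1).2, (mul_conj_self x.2).2, sub_neg_eq_add,
          inner_def, ← add_smul]
      · rw [snd_mul, fst_conj, snd_conj, neg_mul', add_neg_cancel]

-- ### adjoint identities
lemma inner_mul : ∀ {n : ℕ} (x y z : CD n),
    (CD.inner (x * y) z = CD.inner y (CD.conj x * z)) ∧
      (CD.inner (x * y) z = CD.inner x (z * CD.conj y))
  | 0, x, y, z => by
    constructor
    · show ((show ℝ from x) * (show ℝ from y)) * (show ℝ from z) =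
        (show ℝ from y) * ((show ℝ from x) * (show ℝ from z))
      ring
    · show ((show ℝ from x) * (show ℝ from y)) * (show ℝ from z) =
        (show ℝ from x) * ((show ℝ from z) * (show ℝ from y))
      ring
  | n + 1, x, y, z => by
    have h1 : CD.inner (x.1 * y.1) z.1 = CD.inner y.1 (CD.conj x.1 * z.1) :=
      (inner_mul x.1 y.1 z.1).1
    have h1' : CD.inner (x.1 * y.1) z.1 = CD.inner x.1 (z.1 * CD.conj y.1) :=
      (inner_mul x.1 y.1 z.1).2
    have h2 : CD.inner (CD.conj y.2 * x.2) z.1 = CD.inner y.2 (x.2 * CD.conj z.1) := by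
      rw [(inner_mul (CD.conj y.2) x.2 z.1).1, conj_conj, inner_comm]
      exact (inner_mul y.2 z.1 x.2).2
    have h2' : CD.inner (CD.conj y.2 * x.2) z.1 = CD.inner x.2 (y.2 * z.1) := by
      rw [(inner_mul (CD.conj y.2) x.2 z.1).1, conj_conj]
    have h3 : CD.inner (y.2 * x.1) z.2 = CD.inner y.2 (z.2 * CD.conj x.1) :=
      (inner_mul y.2 x.1 z.2).2
    have h3' : CD.inner (y.2 * x.1) z.2 = CD.inner x.1 (CD.conj y.2 * z.2) :=
      (inner_mul y.2 x.1 z.2).1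
    have h4 : CD.inner (x.2 * CD.conj y.1) z.2 = CD.inner y.1 (CD.conj z.2 * x.2) := by
      rw [(inner_mul x.2 (CD.conj y.1) z.2).2, conj_conj, inner_comm]
      exact (inner_mul z.2 y.1 x.2).1
    have h4' : CD.inner (x.2 * CD.conj y.1) z.2 = CD.inner x.2 (z.2 * y.1) := by
      rw [(inner_mul x.2 (CD.conj y.1) z.2).2, conj_conj]
    constructor
    · rw [inner_def, inner_def, fst_mul, snd_mul, fst_mul, snd_mul, fst_conj, snd_conj]
      rw [mul_neg', neg_mul', sub_neg_eq_add, sub_eq_add_neg]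
      simp only [inner_add_left, inner_add_right, inner_neg_left, inner_neg_right]
      rw [h1, h2, h3, h4]; ring
    · rw [inner_def, inner_def, fst_mul, snd_mul, fst_mul, snd_mul, fst_conj, snd_conj]
      rw [conj_conj, conj_neg, neg_mul', neg_mul', sub_neg_eq_add, sub_eq_add_neg]
      simp only [inner_add_left, inner_add_right, inner_neg_left, inner_neg_right]
      rw [h1', h2', h3', h4']; ring

lemma inner_mul_left {n : ℕ} (x y z : CD n) :
    CD.inner (x * y) z = CD.inner y (CD.conj x * z) := (inner_mul x y z).1
lemma inner_mul_right {n : ℕ} (x y z : CD n) :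
    CD.inner (x * y) z = CD.inner x (z * CD.conj y) := (inner_mul x y z).2

-- ### trace and purity
lemma inner_e0_e0 : ∀ {n : ℕ}, CD.inner (e0 n) (e0 n) = 1
  | 0 => mul_one 1
  | n + 1 => by
    rw [e0_succ]
    show CD.inner (e0 n) (e0 n) + CD.inner (0 : CD n) 0 = 1
    rw [inner_e0_e0, inner_zero_right, add_zero]

lemma trace_eq : ∀ {n : ℕ} (x : CD n), x + CD.conj x = (2 * CD.inner x (e0 n)) • e0 n
  | 0, x => by
    show (show ℝ from x) + (show ℝ from x) = (2 * ((show ℝ from x) * 1)) • (1 : ℝ)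
    rw [smul_eq_mul]; ring
  | n + 1, x => by
    rw [smul_e0_succ, e0_succ]
    refine pair_ext _ _ ?_ ?_
    · rw [fst_add, fst_conj]
      show x.1 + CD.conj x.1 = _
      rw [trace_eq x.1]
      show _ = (2 * (CD.inner x.1 (e0 n) + CD.inner x.2 0)) • e0 n
      rw [inner_zero_right, add_zero]
    · rw [snd_add, snd_conj]
      show x.2 + -x.2 = (0 : CD (n+1)).2
      rw [add_neg_cancel, snd_zero]

lemma e0_ne_zero {n : ℕ} : (e0 n) ≠ (0 : CD n) := by
  intro h
  have := inner_e0_e0 (n := n)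
  rw [h, inner_zero_right] at this
  norm_num at this

lemma isPure_iff {n : ℕ} (x : CD n) : IsPure x ↔ CD.inner x (e0 n) = 0 := by
  constructor
  · intro h
    have h2 : (2 * CD.inner x (e0 n)) • e0 n = 0 := by rw [← trace_eq]; exact h
    have h3 := congrArg (fun y => CD.inner y (e0 n)) h2
    simp only [inner_smul_left, inner_zero_left, inner_e0_e0, mul_one] at h3
    linarith
  · intro h
    show x + CD.conj x = 0
    rw [trace_eq, h, mul_zero, zero_smul]

lemma conj_eq_neg_of_inner_e0 {n : ℕ} (x : CD n) (h : CD.inner x (e0 n) = 0) :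
    CD.conj x = -x := by
  have h2 := trace_eq x
  rw [h, mul_zero, zero_smul] at h2
  exact eq_neg_of_add_eq_zero_right h2

-- ### tilde
lemma tilde_add {n : ℕ} (x y : CD (n+1)) : tilde (x + y) = tilde x + tilde y := by
  rw [tilde_def, tilde_def, tilde_def]
  refine pair_ext _ _ ?_ ?_
  · show -(x + y).2 = -x.2 + -y.2
    rw [snd_add]; abel
  · rfl

lemma tilde_smul {n : ℕ} (r : ℝ) (x : CD (n+1)) : tilde (r • x) = r • tilde x := by
  rw [tilde_def, tilde_def]
  refine pair_ext _ _ ?_ ?_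
  · show -(r • x).2 = (r • ((-x.2 : CD n), x.1)).1
    erw [snd_smul, fst_smul, smul_neg]
  · rfl

lemma tilde_tilde {n : ℕ} (x : CD (n+1)) : tilde (tilde x) = -x := by
  rw [tilde_def, tilde_def]
  refine pair_ext _ _ ?_ ?_
  · show -x.1 = (-x).1
    rw [fst_neg]
  · show -x.2 = (-x).2
    rw [snd_neg]

lemma inner_tilde_tilde {n : ℕ} (x y : CD (n+1)) :
    CD.inner (tilde x) (tilde y) = CD.inner x y := by
  erw [tilde_def, tilde_def, inner_def, inner_def]
  show CD.inner (-x.2) (-y.2) + CD.inner x.1 y.1 = _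
  rw [inner_neg_left, inner_neg_right, neg_neg, add_comm]

lemma inner_tilde_left {n : ℕ} (x y : CD (n+1)) :
    CD.inner (tilde x) y = -CD.inner x (tilde y) := by
  erw [tilde_def, tilde_def, inner_def, inner_def]
  show CD.inner (-x.2) y.1 + CD.inner x.1 y.2 = -(CD.inner x.1 (-y.2) + CD.inner x.2 y.1)
  rw [inner_neg_left, inner_neg_right, inner_comm x.2 y.1]
  ring

lemma inner_tilde_self {n : ℕ} (x : CD (n+1)) : CD.inner x (tilde x) = 0 := by
  erw [tilde_def, inner_def]
  show CD.inner x.1 (-x.2) + CD.inner x.2 x.1 = 0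
  rw [inner_neg_right, inner_comm]
  ring

lemma inner_tilde_e0 {n : ℕ} (x : CD (n+1)) :
    CD.inner (tilde x) (e0 (n+1)) = -CD.inner x (te0 (n+1)) := by
  erw [tilde_def, e0_succ, te0_succ, inner_def, inner_def]
  show CD.inner (-x.2) (e0 n) + CD.inner x.1 0 = -(CD.inner x.1 0 + CD.inner x.2 (e0 n))
  rw [inner_neg_left, inner_zero_right]
  ring

lemma inner_tilde_te0 {n : ℕ} (x : CD (n+1)) :
    CD.inner (tilde x) (te0 (n+1)) = CD.inner x (e0 (n+1)) := by
  erw [tilde_def, e0_succ, te0_succ, inner_def, inner_def]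
  show CD.inner (-x.2) 0 + CD.inner x.1 (e0 n) = CD.inner x.1 (e0 n) + CD.inner x.2 0
  rw [inner_zero_right, inner_zero_right, zero_add, add_zero]

-- ### norm
lemma norm_one_iff {n : ℕ} (x : CD n) : CD.norm x = 1 ↔ CD.inner x x = 1 := by
  unfold CD.norm
  exact Real.sqrt_eq_one

-- ### bilinear expansion of products
lemma mul_combo {n : ℕ} (r s p q : ℝ) (x y u v : CD n) :
    (r • x + s • y) * (p • u + q • v) =
      (r * p) • (x * u) + (r * q) • (x * v) + (s * p) • (y * u) + (s * q) • (y * v) := by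
  rw [(mul_add' (r • x + s • y) (p • u) (q • v)).1,
    (mul_add' (p • u) (r • x) (s • y)).2, (mul_add' (q • v) (r • x) (s • y)).2,
    (mul_smul' p (r • x) u).1, (mul_smul' p (s • y) u).1,
    (mul_smul' q (r • x) v).1, (mul_smul' q (s • y) v).1,
    (mul_smul' r u x).2, (mul_smul' s u y).2, (mul_smul' r v x).2, (mul_smul' s v y).2,
    smul_smul, smul_smul, smul_smul, smul_smul]
  rw [mul_comm p r, mul_comm p s, mul_comm q r, mul_comm q s]
  abel

-- ### purity helpers
lemma isPure_neg {n : ℕ} (x : CD n) (h : IsPure x) : IsPure (-x) := by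
  unfold IsPure at *
  rw [conj_neg]
  rw [show -x + -CD.conj x = -(x + CD.conj x) by abel, h, neg_zero]

lemma isPure_smul_add {n : ℕ} (r s : ℝ) (x y : CD n) (hx : IsPure x) (hy : IsPure y) :
    IsPure (r • x + s • y) := by
  unfold IsPure at *
  rw [conj_add, conj_smul, conj_smul,
    show r • x + s • y + (r • CD.conj x + s • CD.conj y)
      = r • (x + CD.conj x) + s • (y + CD.conj y) by rw [smul_add, smul_add]; abel,
    hx, hy, smul_zero, smul_zero, add_zero]

lemma isDoublyPure_succ {n : ℕ} (x : CD (n+1)) :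
    IsDoublyPure x ↔ (IsPure x.1 ∧ IsPure x.2) := Iff.rfl

lemma isDoublyPure_combo {n : ℕ} (r s : ℝ) (x : CD (n+1)) (h : IsDoublyPure x) :
    IsDoublyPure (r • x + s • tilde x) := by
  rw [isDoublyPure_succ] at h ⊢
  constructor
  · rw [fst_add, fst_smul, fst_smul, tilde_def]
    exact isPure_smul_add r s _ _ h.1 (isPure_neg _ h.2)
  · rw [snd_add, snd_smul, snd_smul, tilde_def]
    exact isPure_smul_add r s _ _ h.2 h.1

-- ### norm of combinations
lemma inner_combo_self {n : ℕ} (r s : ℝ) (x : CD (n+1)) (hx : CD.inner x x = 1) :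
    CD.inner (r • x + s • tilde x) (r • x + s • tilde x) = r ^ 2 + s ^ 2 := by
  rw [inner_combo, hx, inner_tilde_self, inner_tilde_tilde, hx,
    inner_comm (tilde x) x, inner_tilde_self]
  ring

lemma norm_combo {n : ℕ} (r s : ℝ) (x : CD (n+1)) (hx : CD.inner x x = 1)
    (hrs : r ^ 2 + s ^ 2 = 1) : CD.norm (r • x + s • tilde x) = 1 := by
  rw [norm_one_iff, inner_combo_self r s x hx, hrs]

-- ### the key zero-divisor lemma
lemma zd_key {n : ℕ} (a b : CD (n+1)) (hab : a * b = 0)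
    (ha : CD.inner a a = 1) (hb : CD.inner b b = 1) :
    a * tilde b = 0 ∧ tilde a * b = 0 ∧ tilde a * tilde b = 0 := by
  -- purity of a and b
  have hpb : CD.inner b (e0 (n+1)) = 0 := by
    have h1 : CD.inner (a * b) a = 0 := by rw [hab, inner_zero_left]
    rwa [inner_mul_left, (mul_conj_self a).2, inner_smul_right, ha, one_mul] at h1
  have hpa : CD.inner a (e0 (n+1)) = 0 := by
    have h1 : CD.inner (a * b) b = 0 := by rw [hab, inner_zero_left]
    rwa [inner_mul_right, (mul_conj_self b).1, inner_smul_right, hb, one_mul] at h1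
  have hca : CD.conj a = -a := conj_eq_neg_of_inner_e0 a hpa
  have hcb : CD.conj b = -b := conj_eq_neg_of_inner_e0 b hpb
  have hba : b * a = 0 := by
    have : CD.conj (a * b) = b * a := by
      rw [conj_mul', hca, hcb, neg_mul', mul_neg', neg_neg]
    rw [← this, hab, conj_zero]
  -- component purity of the first components
  have hca1 : CD.conj a.1 = -a.1 := by
    have := congrArg Prod.fst hca
    rwa [fst_conj, fst_neg] at this
  have hcb1 : CD.conj b.1 = -b.1 := by
    have := congrArg Prod.fst hcb
    rwa [fst_conj, fst_neg] at this
  -- componentwise equations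
  have E1 : a.1 * b.1 = CD.conj b.2 * a.2 := by
    have := congrArg Prod.fst hab
    rw [fst_mul, fst_zero] at this
    exact sub_eq_zero.mp this
  have E2 : b.2 * a.1 = a.2 * b.1 := by
    have := congrArg Prod.snd hab
    rw [snd_mul, snd_zero, hcb1, mul_neg'] at this
    exact (add_neg_eq_zero.mp this)
  have E3 : b.1 * a.1 = CD.conj a.2 * b.2 := by
    have := congrArg Prod.fst hba
    rw [fst_mul, fst_zero] at this
    exact sub_eq_zero.mp this
  -- purity of the second components
  have hsum_a : CD.inner a.1 a.1 + CD.inner a.2 a.2 = 1 := by rw [← inner_def]; exact ha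
  have hsum_b : CD.inner b.1 b.1 + CD.inner b.2 b.2 = 1 := by rw [← inner_def]; exact hb
  have hpb2 : CD.inner b.2 (e0 n) = 0 := by
    have k1 : CD.inner (b.2 * a.1) a.1 = CD.inner a.1 a.1 * CD.inner b.2 (e0 n) := by
      rw [inner_mul_right, (mul_conj_self a.1).1, inner_smul_right]
    have k2 : CD.inner (a.2 * b.1) a.1 = -(CD.inner a.2 a.2 * CD.inner b.2 (e0 n)) := by
      rw [inner_mul_right, hcb1, mul_neg', inner_neg_right, E1]
      have : CD.inner a.2 (CD.conj b.2 * a.2) = CD.inner a.2 a.2 * CD.inner b.2 (e0 n) := by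
        rw [inner_comm, inner_mul_left, conj_conj, inner_comm,
          inner_mul_right, (mul_conj_self a.2).1, inner_smul_right]
      rw [this]
    rw [E2, k2] at k1
    have : (CD.inner a.1 a.1 + CD.inner a.2 a.2) * CD.inner b.2 (e0 n) = 0 := by
      linarith [k1]
    rw [hsum_a, one_mul] at this
    exact this
  have hpa2 : CD.inner a.2 (e0 n) = 0 := by
    have k3 : CD.inner (a.2 * b.1) b.1 = CD.inner b.1 b.1 * CD.inner a.2 (e0 n) := by
      rw [inner_mul_right, (mul_conj_self b.1).1, inner_smul_right]
    have k4 : CD.inner (b.2 * a.1) b.1 = -(CD.inner b.2 b.2 * CD.inner a.2 (e0 n)) := by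
      rw [inner_mul_right, hca1, mul_neg', inner_neg_right, E3]
      have : CD.inner b.2 (CD.conj a.2 * b.2) = CD.inner b.2 b.2 * CD.inner a.2 (e0 n) := by
        rw [inner_comm, inner_mul_left, conj_conj, inner_comm,
          inner_mul_right, (mul_conj_self b.2).1, inner_smul_right]
      rw [this]
    rw [E2, k3] at k4
    have : (CD.inner b.1 b.1 + CD.inner b.2 b.2) * CD.inner a.2 (e0 n) = 0 := by
      linarith [k4]
    rw [hsum_b, one_mul] at this
    exact this
  have hca2 : CD.conj a.2 = -a.2 := conj_eq_neg_of_inner_e0 a.2 hpa2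
  have hcb2 : CD.conj b.2 = -b.2 := conj_eq_neg_of_inner_e0 b.2 hpb2
  -- clean relations
  have R1 : a.1 * b.1 = -(b.2 * a.2) := by rw [E1, hcb2, neg_mul']
  have R2 : b.2 * a.1 = a.2 * b.1 := E2
  have R3 : b.1 * a.1 = -(a.2 * b.2) := by rw [E3, hca2, neg_mul']
  have R4 : a.1 * b.2 = b.1 * a.2 := by
    have := congrArg CD.conj E2
    rwa [conj_mul', conj_mul', hca1, hcb1, hca2, hcb2, neg_mul', neg_mul', mul_neg',
      mul_neg', neg_neg, neg_neg] at this
  refine ⟨?_, ?_, ?_⟩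
  · refine pair_ext _ _ ?_ ?_
    · rw [fst_mul, fst_zero, tilde_def]
      show a.1 * (-b.2) - CD.conj b.1 * a.2 = 0
      rw [hcb1, mul_neg', neg_mul', R4, sub_neg_eq_add, neg_add_cancel]
    · rw [snd_mul, snd_zero, tilde_def]
      show b.1 * a.1 + a.2 * CD.conj (-b.2) = 0
      rw [conj_neg, hcb2, neg_neg, R3, neg_add_cancel]
  · refine pair_ext _ _ ?_ ?_
    · rw [fst_mul, fst_zero, tilde_def]
      show (-a.2) * b.1 - CD.conj b.2 * a.1 = 0
      rw [hcb2, neg_mul', neg_mul', R2, sub_neg_eq_add, neg_add_cancel]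
    · rw [snd_mul, snd_zero, tilde_def]
      show b.2 * (-a.2) + a.1 * CD.conj b.1 = 0
      rw [hcb1, mul_neg', mul_neg', R1, neg_neg, neg_add_cancel]
  · refine pair_ext _ _ ?_ ?_
    · rw [fst_mul, fst_zero, tilde_def, tilde_def]
      show (-a.2) * (-b.2) - CD.conj b.1 * a.1 = 0
      rw [hcb1, neg_mul', neg_mul', mul_neg', neg_neg, R3, sub_neg_eq_add, add_neg_cancel]
    · rw [snd_mul, snd_zero, tilde_def, tilde_def]
      show b.1 * (-a.2) + a.1 * CD.conj (-b.2) = 0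
      rw [conj_neg, hcb2, neg_neg, mul_neg', R4, neg_add_cancel]

-- ### HaPerp
lemma mem_haPerp {n : ℕ} (a x : CD n) (h1 : CD.inner x (e0 n) = 0)
    (h2 : CD.inner x (tilde a) = 0) (h3 : CD.inner x a = 0)
    (h4 : CD.inner x (te0 n) = 0) : x ∈ HaPerp a := by
  intro y hy
  induction hy using Submodule.span_induction with
  | mem z hz =>
    simp only [Set.mem_insert_iff, Set.mem_singleton_iff] at hz
    rcases hz with rfl | rfl | rfl | rfl
    · exact h1
    · exact h2
    · exact h3
    · exact h4
  | zero => exact inner_zero_right x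
  | add u v _ _ ihu ihv => rw [inner_add_right, ihu, ihv, add_zero]
  | smul r u _ ihu => rw [inner_smul_right, ihu, mul_zero]

lemma haPerp_spec {n : ℕ} (a x : CD n) (h : x ∈ HaPerp a) :
    CD.inner x (e0 n) = 0 ∧ CD.inner x (tilde a) = 0 ∧ CD.inner x a = 0 ∧
      CD.inner x (te0 n) = 0 := by
  refine ⟨h _ ?_, h _ ?_, h _ ?_, h _ ?_⟩ <;>
    · apply Submodule.subset_span
      simp [Set.mem_insert_iff]

-- ### fixed points
lemma fixed_helper {n : ℕ} (r s : ℝ) (x : CD (n+1)) (hx : CD.inner x x = 1)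
    (h : r • x + s • tilde x = x) : r = 1 ∧ s = 0 := by
  have h0 : CD.inner x (tilde x) = 0 := inner_tilde_self x
  have h0' : CD.inner (tilde x) x = 0 := by rw [inner_comm]; exact h0
  have h1 := congrArg (fun y => CD.inner y x) h
  simp only [inner_add_left, inner_smul_left] at h1
  rw [hx, h0'] at h1
  have h2 := congrArg (fun y => CD.inner y (tilde x)) h
  simp only [inner_add_left, inner_smul_left] at h2
  rw [h0, inner_tilde_tilde, hx] at h2
  constructor <;> linarith
end CD


/-- The real Stiefel manifold `V_{2^n-2,2}`: orthonormal pairs of doubly pure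
elements of `A n`. -/
def V2 (n : ℕ) : Set (CD n × CD n) :=
  {p | CD.IsDoublyPure p.1 ∧ CD.IsDoublyPure p.2 ∧
    CD.norm p.1 = 1 ∧ CD.norm p.2 = 1 ∧ CD.inner p.1 p.2 = 0}

/-- The complex Stiefel manifold `W_{2^{n-1}-1,2}` realized as the pairs
`(a,b) ∈ V_{2^n-2,2}` with `b ∈ ℍ_a^⊥`. -/
def W (n : ℕ) : Set (CD n × CD n) := {p ∈ V2 n | p.2 ∈ CD.HaPerp p.1}

/-- The zero set `X_n` of the Hopf construction: pairs of norm-one zero divisors. -/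
def X (n : ℕ) : Set (CD n × CD n) :=
  {p | CD.norm p.1 = 1 ∧ CD.norm p.2 = 1 ∧ p.1 * p.2 = 0}

open CD in
/-- For `n ≥ 4`, `τ((r,s),(p,q),(a,b)) = (ra + sã, pb + qb̃)`
(with `r²+s²=1`, `p²+q²=1`) preserves `W_{2^{n-1}-1,2}` and `X_n`, and defines a
free action of the torus `T = S¹ × S¹` on both: the identity acts trivially, the
action is compatible with the group law of `S¹`, and only the identity has fixed
points. -/
theorem statement9 (n : ℕ) (hn : 4 ≤ n) :
    (∀ r s p q : ℝ, r ^ 2 + s ^ 2 = 1 → p ^ 2 + q ^ 2 = 1 →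
      ∀ a b : CD n, (a, b) ∈ W n →
        (r • a + s • CD.tilde a, p • b + q • CD.tilde b) ∈ W n) ∧
    (∀ r s p q : ℝ, r ^ 2 + s ^ 2 = 1 → p ^ 2 + q ^ 2 = 1 →
      ∀ a b : CD n, (a, b) ∈ X n →
        (r • a + s • CD.tilde a, p • b + q • CD.tilde b) ∈ X n) ∧
    (∀ a b : CD n,
      ((1 : ℝ) • a + (0 : ℝ) • CD.tilde a, (1 : ℝ) • b + (0 : ℝ) • CD.tilde b) = (a, b)) ∧
    (∀ r s r' s' : ℝ, ∀ a : CD n,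
      r' • (r • a + s • CD.tilde a) + s' • CD.tilde (r • a + s • CD.tilde a) =
        (r' * r - s' * s) • a + (r' * s + s' * r) • CD.tilde a) ∧
    (∀ r s p q : ℝ, r ^ 2 + s ^ 2 = 1 → p ^ 2 + q ^ 2 = 1 →
      ∀ a b : CD n, ((a, b) ∈ W n ∨ (a, b) ∈ X n) →
        (r • a + s • CD.tilde a, p • b + q • CD.tilde b) = (a, b) →
        r = 1 ∧ s = 0 ∧ p = 1 ∧ q = 0) := by
  obtain ⟨m, rfl⟩ : ∃ m, n = m + 1 := ⟨n - 1, by omega⟩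
  refine ⟨?_, ?_, ?_, ?_, ?_⟩
  -- (i) W is preserved
  · intro r s p q hr hp a b hW
    obtain ⟨⟨hda, hdb, hna, hnb, hiab⟩, hperp⟩ := hW
    obtain ⟨g1, g2, g3, g4⟩ := haPerp_spec a b hperp
    have ia : CD.inner a a = 1 := (norm_one_iff a).mp hna
    have ib : CD.inner b b = 1 := (norm_one_iff b).mp hnb
    -- auxiliary orthogonality facts
    have t1 : CD.inner (tilde b) (e0 (m+1)) = 0 := by rw [inner_tilde_e0, g4, neg_zero]
    have t2 : CD.inner (tilde b) (tilde a) = 0 := by rw [inner_tilde_tilde]; exact g3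
    have t3 : CD.inner (tilde b) a = 0 := by rw [inner_tilde_left, g2, neg_zero]
    have t4 : CD.inner (tilde b) (te0 (m+1)) = 0 := by rw [inner_tilde_te0]; exact g1
    refine ⟨⟨isDoublyPure_combo r s a hda, isDoublyPure_combo p q b hdb,
      norm_combo r s a ia hr, norm_combo p q b ib hp, ?_⟩, ?_⟩
    · show CD.inner (r • a + s • tilde a) (p • b + q • tilde b) = 0
      rw [inner_combo, hiab]
      rw [show CD.inner a (tilde b) = 0 by rw [inner_comm]; exact t3]
      rw [show CD.inner (tilde a) b = 0 by rw [inner_comm]; exact g2]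
      rw [show CD.inner (tilde a) (tilde b) = 0 by rw [inner_comm]; exact t2]
      ring
    · show (p • b + q • tilde b) ∈ HaPerp (r • a + s • tilde a)
      have key : ∀ y : CD (m+1), CD.inner b y = 0 → CD.inner (tilde b) y = 0 →
          CD.inner (p • b + q • tilde b) y = 0 := by
        intro y hb1 hb2
        rw [inner_add_left, inner_smul_left, inner_smul_left, hb1, hb2]; ring
      apply mem_haPerp
      · exact key _ g1 t1
      · rw [tilde_add, tilde_smul, tilde_smul, tilde_tilde]
        apply key
        · rw [CD.inner_add_right, CD.inner_smul_right, CD.inner_smul_right, g2,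
            CD.inner_neg_right, g3]
          ring
        · rw [CD.inner_add_right, CD.inner_smul_right, CD.inner_smul_right, t2,
            CD.inner_neg_right, t3]
          ring
      · apply key
        · rw [CD.inner_add_right, CD.inner_smul_right, CD.inner_smul_right, g3, g2]; ring
        · rw [CD.inner_add_right, CD.inner_smul_right, CD.inner_smul_right, t3, t2]; ring
      · exact key _ g4 t4
  -- (ii) X is preserved
  · intro r s p q hr hp a b hX
    obtain ⟨hna, hnb, hab⟩ := hX
    have ia : CD.inner a a = 1 := (norm_one_iff a).mp hna
    have ib : CD.inner b b = 1 := (norm_one_iff b).mp hnb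
    obtain ⟨z1, z2, z3⟩ := zd_key a b hab ia ib
    refine ⟨norm_combo r s a ia hr, norm_combo p q b ib hp, ?_⟩
    show (r • a + s • tilde a) * (p • b + q • tilde b) = 0
    rw [mul_combo, hab, z1, z2, z3, smul_zero, smul_zero, smul_zero, smul_zero,
      add_zero, add_zero, add_zero]
  -- (iii) identity acts trivially
  · intro a b
    rw [one_smul, one_smul, zero_smul, zero_smul, add_zero, add_zero]
  -- (iv) group law
  · intro r s r' s' a
    rw [tilde_add, tilde_smul, tilde_smul, tilde_tilde]
    simp only [smul_add, smul_neg, smul_smul, sub_smul, add_smul, neg_smul]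
    abel
  -- (v) freeness
  · intro r s p q hr hp a b hmem heq
    have ia : CD.inner a a = 1 := by
      rcases hmem with h | h
      · exact (norm_one_iff a).mp h.1.2.2.1
      · exact (norm_one_iff a).mp h.1
    have ib : CD.inner b b = 1 := by
      rcases hmem with h | h
      · exact (norm_one_iff b).mp h.1.2.2.2.1
      · exact (norm_one_iff b).mp h.2.1
    have h1 : r • a + s • tilde a = a := congrArg Prod.fst heq
    have h2 : p • b + q • tilde b = b := congrArg Prod.snd heq
    obtain ⟨e1, e2⟩ := fixed_helper r s a ia h1
    obtain ⟨e3, e4⟩ := fixed_helper p q b ib h2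
    exact ⟨e1, e2, e3, e4⟩
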